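/- Let d ≥ 0 be an integer and ν a probability measure on the finite set {0,1,…,d}. Let (X_i)_{i≥1} and (Y_i)_{i≥1} be random variables on a probability space such that the whole family (X_1, Y_1, X_2, Y_2, …) is independent and each X_i and each Y_i has distribution ν. Then almost surely there exist infinitely many n ∈ ℕ with X_1 + X_2 + ⋯ + X_n = Y_1 + Y_2 + ⋯ + Y_n. -/

import Mathlib

set_option linter.unusedSectionVars false
set_option maxHeartbeats 1000000

open MeasureTheory Finset

namespace RWMeet

variable {d : ℕ} {Ω : Type*} [MeasurableSpace Ω] {μ : Measure Ω} [IsProbabilityMeasure μ]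
  {ν : Measure (Fin (d + 1))} [IsProbabilityMeasure ν]
  {X Y : ℕ → Ω → Fin (d + 1)}

/-- the state space of one pair step -/
abbrev V (d : ℕ) := Fin (d + 1) × Fin (d + 1)

def W (X Y : ℕ → Ω → Fin (d + 1)) (i : ℕ) (ω : Ω) : V d := (X i ω, Y i ω)

noncomputable def pp (ν : Measure (Fin (d + 1))) (v : V d) : ENNReal := ν {v.1} * ν {v.2}

noncomputable def wordP (ν : Measure (Fin (d + 1))) {m : ℕ} (v : Fin m → V d) : ENNReal :=
  ∏ j, pp ν (v j)

/-- elementary cylinder -/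
def C (X Y : ℕ → Ω → Fin (d + 1)) (k : ℕ) {m : ℕ} (v : Fin m → V d) : Set Ω :=
  {ω | ∀ j : Fin m, W X Y (k + (j : ℕ)) ω = v j}

lemma measurable_C (hX : ∀ i, Measurable (X i)) (hY : ∀ i, Measurable (Y i))
    (k : ℕ) {m : ℕ} (v : Fin m → V d) : MeasurableSet (C X Y k v) := by
  have : C X Y k v = ⋂ j : Fin m,
      (X (k + (j : ℕ)) ⁻¹' {(v j).1} ∩ Y (k + (j : ℕ)) ⁻¹' {(v j).2}) := by
    ext ω
    simp only [C, Set.mem_setOf_eq, Set.mem_iInter, Set.mem_inter_iff, Set.mem_preimage,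
      Set.mem_singleton_iff, W, Prod.ext_iff]
  rw [this]
  exact MeasurableSet.iInter fun j => ((hX _ (measurableSet_singleton _)).inter
    (hY _ (measurableSet_singleton _)))

lemma measure_X_pre (hX : ∀ i, Measurable (X i)) (hXd : ∀ i, Measure.map (X i) μ = ν)
    (i : ℕ) (a : Fin (d + 1)) : μ (X i ⁻¹' {a}) = ν {a} := by
  rw [← hXd i, Measure.map_apply (hX i) (measurableSet_singleton a)]

lemma measure_C (hX : ∀ i, Measurable (X i)) (hY : ∀ i, Measurable (Y i))
    (hXd : ∀ i, Measure.map (X i) μ = ν) (hYd : ∀ i, Measure.map (Y i) μ = ν)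
    (hind : ProbabilityTheory.iIndepFun (Sum.elim X Y) μ)
    (k : ℕ) {m : ℕ} (v : Fin m → V d) :
    μ (C X Y k v) = wordP ν v := by
  classical
  set vx : ℕ → Fin (d + 1) := fun i => if h : i - k < m then (v ⟨i - k, h⟩).1 else 0 with hvx
  set vy : ℕ → Fin (d + 1) := fun i => if h : i - k < m then (v ⟨i - k, h⟩).2 else 0 with hvy
  set sets : ℕ ⊕ ℕ → Set (Fin (d + 1)) :=
    Sum.elim (fun i => {vx i}) (fun i => {vy i}) with hsets
  set S : Finset (ℕ ⊕ ℕ) :=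
    ((range m).image fun j => Sum.inl (k + j)) ∪ ((range m).image fun j => Sum.inr (k + j))
    with hS
  have hmeas : ∀ i ∈ S, MeasurableSet (sets i) := by
    rintro (i | i) _ <;> exact measurableSet_singleton _
  have h1 := (ProbabilityTheory.iIndepFun_iff_measure_inter_preimage_eq_mul.mp hind) S hmeas
  have hvxj : ∀ j : Fin m, vx (k + (j : ℕ)) = (v j).1 := by
    intro j
    simp only [hvx, Nat.add_sub_cancel_left, j.isLt, dif_pos, Fin.eta]
  have hvyj : ∀ j : Fin m, vy (k + (j : ℕ)) = (v j).2 := by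
    intro j
    simp only [hvy, Nat.add_sub_cancel_left, j.isLt, dif_pos, Fin.eta]
  have hset : (⋂ i ∈ S, Sum.elim X Y i ⁻¹' sets i) = C X Y k v := by
    ext ω
    simp only [Set.mem_iInter, C, Set.mem_setOf_eq]
    constructor
    · intro h j
      have h1 := h (Sum.inl (k + (j : ℕ))) (by
        apply mem_union_left
        exact mem_image.2 ⟨(j : ℕ), mem_range.2 j.isLt, rfl⟩)
      have h2 := h (Sum.inr (k + (j : ℕ))) (by
        apply mem_union_right
        exact mem_image.2 ⟨(j : ℕ), mem_range.2 j.isLt, rfl⟩)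
      simp only [Sum.elim_inl, Sum.elim_inr, hsets, Set.mem_preimage,
        Set.mem_singleton_iff] at h1 h2
      rw [hvxj] at h1
      rw [hvyj] at h2
      exact Prod.ext h1 h2
    · intro h i hi
      rcases mem_union.1 hi with hi | hi
      · rcases mem_image.1 hi with ⟨j, hj, rfl⟩
        have := h ⟨j, mem_range.1 hj⟩
        simp only [Sum.elim_inl, hsets, Set.mem_preimage, Set.mem_singleton_iff]
        rw [hvxj ⟨j, mem_range.1 hj⟩]
        exact congrArg Prod.fst this
      · rcases mem_image.1 hi with ⟨j, hj, rfl⟩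
        have := h ⟨j, mem_range.1 hj⟩
        simp only [Sum.elim_inr, hsets, Set.mem_preimage, Set.mem_singleton_iff]
        rw [hvyj ⟨j, mem_range.1 hj⟩]
        exact congrArg Prod.snd this
  have hdisj : Disjoint ((range m).image fun j => (Sum.inl (k + j) : ℕ ⊕ ℕ))
      ((range m).image fun j => (Sum.inr (k + j) : ℕ ⊕ ℕ)) := by
    simp only [Finset.disjoint_left, mem_image]
    rintro x ⟨j, _, rfl⟩ ⟨j', _, h⟩
    exact Sum.inl_ne_inr h.symm
  have hprod : (∏ i ∈ S, μ (Sum.elim X Y i ⁻¹' sets i)) = wordP ν v := by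
    rw [hS, prod_union hdisj, prod_image (by intro a _ b _ h; simpa using h),
      prod_image (by intro a _ b _ h; simpa using h)]
    have e1 : (∏ j ∈ range m, μ (Sum.elim X Y (Sum.inl (k + j)) ⁻¹' sets (Sum.inl (k + j))))
        = ∏ j : Fin m, ν {(v j).1} := by
      rw [show (∏ j ∈ range m, μ (Sum.elim X Y (Sum.inl (k + j)) ⁻¹' sets (Sum.inl (k + j))))
          = ∏ j ∈ range m, μ (X (k + j) ⁻¹' {vx (k + j)}) from rfl,
        ← Fin.prod_univ_eq_prod_range (fun j => μ (X (k + j) ⁻¹' {vx (k + j)})) m]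
      exact Finset.prod_congr rfl fun j _ => by
        rw [measure_X_pre hX hXd, hvxj j]
    have e2 : (∏ j ∈ range m, μ (Sum.elim X Y (Sum.inr (k + j)) ⁻¹' sets (Sum.inr (k + j))))
        = ∏ j : Fin m, ν {(v j).2} := by
      rw [show (∏ j ∈ range m, μ (Sum.elim X Y (Sum.inr (k + j)) ⁻¹' sets (Sum.inr (k + j))))
          = ∏ j ∈ range m, μ (Y (k + j) ⁻¹' {vy (k + j)}) from rfl,
        ← Fin.prod_univ_eq_prod_range (fun j => μ (Y (k + j) ⁻¹' {vy (k + j)})) m]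
      exact Finset.prod_congr rfl fun j _ => by
        rw [measure_X_pre hY hYd, hvyj j]
    rw [e1, e2, wordP, ← Finset.prod_mul_distrib]
    rfl
  rw [← hset, h1, hprod]


/-- cylinder event given by a finite set of words read off from position `k` -/
def Ev (X Y : ℕ → Ω → Fin (d + 1)) (k : ℕ) {m : ℕ} (T : Finset (Fin m → V d)) : Set Ω :=
  {ω | (fun j : Fin m => W X Y (k + (j : ℕ)) ω) ∈ T}

lemma mem_Ev {k m : ℕ} {T : Finset (Fin m → V d)} {ω : Ω} :
    ω ∈ Ev X Y k T ↔ (fun j : Fin m => W X Y (k + (j : ℕ)) ω) ∈ T := Iff.rfl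

lemma Ev_eq_biUnion (k : ℕ) {m : ℕ} (T : Finset (Fin m → V d)) :
    Ev X Y k T = ⋃ v ∈ T, C X Y k v := by
  ext ω
  simp only [Ev, Set.mem_setOf_eq, Set.mem_iUnion, C]
  constructor
  · intro h; exact ⟨_, h, fun j => rfl⟩
  · rintro ⟨v, hv, h⟩
    have : (fun j : Fin m => W X Y (k + (j : ℕ)) ω) = v := funext h
    rwa [this]

lemma C_disjoint {k m : ℕ} {v u : Fin m → V d} (h : v ≠ u) :
    Disjoint (C X Y k v) (C X Y k u) := by
  rw [Set.disjoint_left]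
  intro ω hv hu
  exact h (funext fun j => (hv j).symm.trans (hu j))

lemma measurable_Ev (hX : ∀ i, Measurable (X i)) (hY : ∀ i, Measurable (Y i))
    (k : ℕ) {m : ℕ} (T : Finset (Fin m → V d)) : MeasurableSet (Ev X Y k T) := by
  rw [Ev_eq_biUnion]
  exact MeasurableSet.biUnion T.countable_toSet fun v _ => measurable_C hX hY k v

variable (hX : ∀ i, Measurable (X i)) (hY : ∀ i, Measurable (Y i))
  (hXd : ∀ i, Measure.map (X i) μ = ν) (hYd : ∀ i, Measure.map (Y i) μ = ν)
  (hind : ProbabilityTheory.iIndepFun (Sum.elim X Y) μ)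

include hX hY hXd hYd hind

lemma measure_Ev (k : ℕ) {m : ℕ} (T : Finset (Fin m → V d)) :
    μ (Ev X Y k T) = ∑ v ∈ T, wordP ν v := by
  rw [Ev_eq_biUnion]
  rw [measure_biUnion_finset ?_ fun v _ => measurable_C hX hY k v]
  · exact Finset.sum_congr rfl fun v _ => measure_C hX hY hXd hYd hind k v
  · intro v _ u _ hvu
    exact C_disjoint hvu

omit hX hY hXd hYd hind

lemma C_append {k m : ℕ} (v : Fin k → V d) (u : Fin m → V d) :
    C X Y 0 (Fin.append v u) = C X Y 0 v ∩ C X Y k u := by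
  ext ω
  simp only [C, Set.mem_setOf_eq, Set.mem_inter_iff]
  constructor
  · intro h
    refine ⟨fun j => ?_, fun j => ?_⟩
    · have := h (Fin.castAdd m j)
      rwa [Fin.append_left, Fin.coe_castAdd] at this
    · have := h (Fin.natAdd k j)
      rw [Fin.append_right, Fin.coe_natAdd] at this
      rwa [zero_add] at this
  · rintro ⟨h1, h2⟩ j
    refine Fin.addCases (fun j => ?_) (fun j => ?_) j
    · rw [Fin.append_left, Fin.coe_castAdd]
      exact h1 j
    · rw [Fin.append_right, Fin.coe_natAdd]
      rw [zero_add]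
      exact h2 j

lemma wordP_append {k m : ℕ} (v : Fin k → V d) (u : Fin m → V d) :
    wordP ν (Fin.append v u) = wordP ν v * wordP ν u := by
  rw [wordP, Fin.prod_univ_add]
  congr 1 <;> exact Finset.prod_congr rfl fun j _ => by simp [Fin.append_left, Fin.append_right]

include hX hY hXd hYd hind

/-- the splitting lemma: a cylinder event on `[0,k)` and one on `[k,k+m)` are independent,
and the second has the same probability as its translate to `[0,m)`. -/
lemma measure_Ev_inter {k m : ℕ} (T : Finset (Fin k → V d)) (U : Finset (Fin m → V d)) :
    μ (Ev X Y 0 T ∩ Ev X Y k U) = μ (Ev X Y 0 T) * μ (Ev X Y 0 U) := by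
  classical
  have hset : Ev X Y 0 T ∩ Ev X Y k U
      = ⋃ x ∈ T ×ˢ U, (C X Y 0 (Fin.append x.1 x.2)) := by
    rw [Ev_eq_biUnion, Ev_eq_biUnion]
    ext ω
    simp only [Set.mem_inter_iff, Set.mem_iUnion, Finset.mem_product, C_append]
    constructor
    · rintro ⟨⟨v, hv, h1⟩, u, hu, h2⟩
      exact ⟨(v, u), ⟨hv, hu⟩, h1, h2⟩
    · rintro ⟨⟨v, u⟩, ⟨hv, hu⟩, h1, h2⟩
      exact ⟨⟨v, hv, h1⟩, u, hu, h2⟩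
  rw [hset, measure_biUnion_finset ?_ ?_]
  · rw [measure_Ev hX hY hXd hYd hind, measure_Ev hX hY hXd hYd hind, Finset.sum_mul_sum]
    rw [Finset.sum_product]
    exact Finset.sum_congr rfl fun v _ => Finset.sum_congr rfl fun u _ => by
      rw [measure_C hX hY hXd hYd hind, wordP_append]
  · intro x hx y hy hxy
    apply C_disjoint
    intro h
    apply hxy
    have hv : x.1 = y.1 := funext fun j => by
      have := congrFun h (Fin.castAdd m j)
      simpa [Fin.append_left] using this
    have hu : x.2 = y.2 := funext fun j => by
      have := congrFun h (Fin.natAdd k j)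
      simpa [Fin.append_right] using this
    exact Prod.ext hv hu
  · exact fun x _ => measurable_C hX hY 0 _


omit hX hY hXd hYd hind

open scoped Classical

/-- partial sum of the first coordinates of the first `t` letters of a word -/
def SXw {m : ℕ} (v : Fin m → V d) (t : ℕ) : ℕ := ∑ j : Fin m, if (j : ℕ) < t then ((v j).1 : ℕ) else 0
def SYw {m : ℕ} (v : Fin m → V d) (t : ℕ) : ℕ := ∑ j : Fin m, if (j : ℕ) < t then ((v j).2 : ℕ) else 0

noncomputable def Teq (d m : ℕ) : Finset (Fin m → V d) :=
  univ.filter fun v => SXw v m = SYw v m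

noncomputable def Tfirst (d m : ℕ) : Finset (Fin m → V d) :=
  univ.filter fun v => SXw v m = SYw v m ∧ ∀ t, 0 < t → t < m → SXw v t ≠ SYw v t

noncomputable def Tret (d j k : ℕ) : Finset (Fin k → V d) :=
  univ.filter fun v =>
    SXw v k = SYw v k ∧ ((Finset.Icc 1 k).filter fun t => SXw v t = SYw v t).card = j

lemma SXw_word (ω : Ω) (k : ℕ) {m : ℕ} {t : ℕ} (ht : t ≤ m) :
    SXw (fun j : Fin m => W X Y (k + (j : ℕ)) ω) t = ∑ i ∈ range t, ((X (k + i) ω : ℕ)) := by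
  rw [SXw]
  simp only [W]
  rw [ Fin.sum_univ_eq_sum_range (fun j => if j < t then ((X (k + j) ω : ℕ)) else 0) m,
    ← Finset.sum_filter]
  congr 1
  ext j
  simp only [Finset.mem_filter, Finset.mem_range]
  omega

lemma SYw_word (ω : Ω) (k : ℕ) {m : ℕ} {t : ℕ} (ht : t ≤ m) :
    SYw (fun j : Fin m => W X Y (k + (j : ℕ)) ω) t = ∑ i ∈ range t, ((Y (k + i) ω : ℕ)) := by
  rw [SYw]
  simp only [W]
  rw [ Fin.sum_univ_eq_sum_range (fun j => if j < t then ((Y (k + j) ω : ℕ)) else 0) m,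
    ← Finset.sum_filter]
  congr 1
  ext j
  simp only [Finset.mem_filter, Finset.mem_range]
  omega

/-- block sums of X over `[k, k+t)` -/
def bX (X : ℕ → Ω → Fin (d + 1)) (k t : ℕ) (ω : Ω) : ℕ := ∑ i ∈ range t, ((X (k + i) ω : ℕ))

lemma mem_Ev_Teq {ω : Ω} (k m : ℕ) :
    ω ∈ Ev X Y k (Teq d m) ↔ bX X k m ω = bX Y k m ω := by
  rw [mem_Ev, Teq, Finset.mem_filter]
  simp only [Finset.mem_univ, true_and]
  rw [SXw_word ω k (le_refl m), SYw_word ω k (le_refl m)]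
  rfl

lemma mem_Ev_Tfirst {ω : Ω} (k m : ℕ) :
    ω ∈ Ev X Y k (Tfirst d m) ↔
      (bX X k m ω = bX Y k m ω ∧ ∀ t, 0 < t → t < m → bX X k t ω ≠ bX Y k t ω) := by
  rw [mem_Ev, Tfirst, Finset.mem_filter]
  simp only [Finset.mem_univ, true_and]
  rw [SXw_word ω k (le_refl m), SYw_word ω k (le_refl m)]
  constructor
  · rintro ⟨h1, h2⟩
    refine ⟨h1, fun t ht htm => ?_⟩
    have := h2 t ht htm
    rwa [SXw_word ω k htm.le, SYw_word ω k htm.le] at this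
  · rintro ⟨h1, h2⟩
    refine ⟨h1, fun t ht htm => ?_⟩
    rw [SXw_word ω k htm.le, SYw_word ω k htm.le]
    exact h2 t ht htm

lemma mem_Ev_Tret {ω : Ω} (j k : ℕ) :
    ω ∈ Ev X Y 0 (Tret d j k) ↔
      (bX X 0 k ω = bX Y 0 k ω ∧
        ((Finset.Icc 1 k).filter fun t => bX X 0 t ω = bX Y 0 t ω).card = j) := by
  rw [mem_Ev, Tret, Finset.mem_filter]
  simp only [Finset.mem_univ, true_and]
  rw [SXw_word ω 0 (le_refl k), SYw_word ω 0 (le_refl k)]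
  constructor
  · rintro ⟨h1, h2⟩
    refine ⟨h1, ?_⟩
    rw [← h2]
    congr 1
    apply Finset.filter_congr
    intro t ht
    rw [Finset.mem_Icc] at ht
    rw [SXw_word ω 0 ht.2, SYw_word ω 0 ht.2]
    rfl
  · rintro ⟨h1, h2⟩
    refine ⟨h1, ?_⟩
    rw [← h2]
    congr 1
    apply Finset.filter_congr
    intro t ht
    rw [Finset.mem_Icc] at ht
    rw [SXw_word ω 0 ht.2, SYw_word ω 0 ht.2]
    rfl

lemma bX_add (X : ℕ → Ω → Fin (d + 1)) (k t : ℕ) (ω : Ω) :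
    bX X 0 (k + t) ω = bX X 0 k ω + bX X k t ω := by
  simp only [bX, zero_add]
  rw [Finset.sum_range_add]


lemma renewal_decomp (n : ℕ) (hn : 0 < n) :
    Ev X Y 0 (Teq d n) =
      ⋃ k ∈ Finset.Icc 1 n, (Ev X Y 0 (Tfirst d k) ∩ Ev X Y k (Teq d (n - k))) := by
  ext ω
  simp only [Set.mem_iUnion, Finset.mem_Icc, exists_prop, Set.mem_inter_iff]
  rw [mem_Ev_Teq]
  constructor
  · intro h
    have hex : ∃ t, 0 < t ∧ t ≤ n ∧ bX X 0 t ω = bX Y 0 t ω := ⟨n, hn, le_refl n, h⟩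
    obtain ⟨hk1, hk2, hk3⟩ := Nat.find_spec hex
    set k := Nat.find hex with hk
    refine ⟨k, ⟨hk1, hk2⟩, ?_, ?_⟩
    · rw [mem_Ev_Tfirst]
      refine ⟨hk3, fun t ht htk heq => ?_⟩
      exact Nat.find_min hex htk ⟨ht, le_trans htk.le hk2, heq⟩
    · rw [mem_Ev_Teq]
      have e1 := bX_add X k (n - k) ω
      have e2 := bX_add Y k (n - k) ω
      rw [Nat.add_sub_cancel' hk2] at e1 e2
      omega
  · rintro ⟨k, ⟨hk1, hk2⟩, hF, hB⟩
    rw [mem_Ev_Tfirst] at hF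
    rw [mem_Ev_Teq] at hB
    have e1 := bX_add X k (n - k) ω
    have e2 := bX_add Y k (n - k) ω
    rw [Nat.add_sub_cancel' hk2] at e1 e2
    omega

lemma Tfirst_disjoint' {k k' : ℕ} (h1 : 0 < k) (hkk : k < k') :
    Disjoint (Ev X Y 0 (Tfirst d k)) (Ev X Y 0 (Tfirst d k')) := by
  rw [Set.disjoint_left]
  rintro ω ha hb
  rw [mem_Ev_Tfirst] at ha hb
  exact hb.2 k h1 hkk ha.1

lemma Tfirst_disjoint {k k' : ℕ} (h1 : 0 < k) (hkk : k < k') {A B : Set Ω} :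
    Disjoint (Ev X Y 0 (Tfirst d k) ∩ A) (Ev X Y 0 (Tfirst d k') ∩ B) :=
  (Tfirst_disjoint' h1 hkk).mono Set.inter_subset_left Set.inter_subset_left

include hX hY hXd hYd hind

lemma measure_renewal (n : ℕ) (hn : 0 < n) :
    μ (Ev X Y 0 (Teq d n)) =
      ∑ k ∈ Finset.Icc 1 n, μ (Ev X Y 0 (Tfirst d k)) * μ (Ev X Y 0 (Teq d (n - k))) := by
  rw [renewal_decomp n hn, measure_biUnion_finset ?_ ?_]
  · exact Finset.sum_congr rfl fun k _ => measure_Ev_inter hX hY hXd hYd hind _ _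
  · intro k hk k' hk' hkk
    simp only [Finset.coe_Icc, Set.mem_Icc] at hk hk'
    rcases lt_or_gt_of_ne hkk with h | h
    · exact Tfirst_disjoint hk.1 h
    · exact (Tfirst_disjoint hk'.1 h).symm
  · exact fun k _ => (measurable_Ev hX hY _ _).inter (measurable_Ev hX hY _ _)

omit hX hY hXd hYd hind

lemma Ev_Teq_zero : Ev X Y 0 (Teq d 0) = Set.univ := by
  ext ω
  simp only [mem_Ev, Teq, Finset.mem_filter, Finset.mem_univ, true_and, Set.mem_univ, iff_true]
  rfl


/-! ### The Cauchy–Schwarz lower bound `μ (E n) ≥ 1 / (n d + 1)` -/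

def wsum {d n : ℕ} (w : Fin n → Fin (d + 1)) : ℕ := ∑ j, (w j : ℕ)

noncomputable def rho (ν : Measure (Fin (d + 1))) : Fin (d + 1) → NNReal :=
  fun a => (ν {a}).toNNReal

noncomputable def qq (ν : Measure (Fin (d + 1))) (n a : ℕ) : NNReal :=
  ∑ w ∈ univ.filter (fun w : Fin n → Fin (d + 1) => wsum w = a), ∏ j, rho ν (w j)

lemma sum_measure_singleton_fin : ∑ a, ν {a} = 1 := by
  have h : (Set.univ : Set (Fin (d + 1))) = ⋃ a ∈ (univ : Finset (Fin (d + 1))), {a} := by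
    simp [Set.iUnion_of_singleton]
  rw [← measure_univ (μ := ν), h, measure_biUnion_finset]
  · intro a _ b _ hab; simp [Set.disjoint_left, hab]
  · exact fun a _ => measurableSet_singleton a

lemma sum_rho : ∑ a, rho ν a = 1 := by
  have h := sum_measure_singleton_fin (ν := ν)
  have : ((∑ a, rho ν a : NNReal) : ENNReal) = 1 := by
    push_cast [rho]
    rw [Finset.sum_congr rfl fun a _ => ENNReal.coe_toNNReal (measure_ne_top ν _), h]
  exact_mod_cast this

lemma SXw_full {m : ℕ} (v : Fin m → V d) : SXw v m = ∑ j, ((v j).1 : ℕ) :=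
  Finset.sum_congr rfl fun j _ => by simp [j.isLt]

lemma SYw_full {m : ℕ} (v : Fin m → V d) : SYw v m = ∑ j, ((v j).2 : ℕ) :=
  Finset.sum_congr rfl fun j _ => by simp [j.isLt]

lemma wsum_lt (n : ℕ) (w : Fin n → Fin (d + 1)) : wsum w < n * d + 1 := by
  have : wsum w ≤ n * d := by
    calc wsum w ≤ (univ : Finset (Fin n)).card • d := by
          apply Finset.sum_le_card_nsmul
          intro j _
          exact Nat.lt_succ_iff.mp (w j).isLt
      _ = n * d := by simp [mul_comm]
  omega

lemma sum_qq (n : ℕ) : ∑ a ∈ range (n * d + 1), qq ν n a = 1 := by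
  classical
  have h1 : ∑ a ∈ range (n * d + 1), qq ν n a
      = ∑ w : Fin n → Fin (d + 1), ∏ j, rho ν (w j) := by
    rw [← Finset.sum_fiberwise_of_maps_to (g := fun w : Fin n → Fin (d + 1) => wsum w)
      (t := range (n * d + 1)) (fun w _ => Finset.mem_range.2 (wsum_lt n w))
      (fun w => ∏ j, rho ν (w j))]
    rfl
  rw [h1, ← Fintype.piFinset_univ, ← Finset.prod_univ_sum (fun _ => univ) (fun _ a => rho ν a)]
  simp [sum_rho]

lemma Teq_sum_eq (n : ℕ) :
    (∑ v ∈ Teq d n, wordP ν v) = ((∑ a ∈ range (n * d + 1), (qq ν n a) ^ 2 : NNReal) : ENNReal) := by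
  classical
  -- first: express the LHS as an `NNReal` sum over pairs of words
  have hcoe : ∀ v : Fin n → V d, wordP ν v
      = ((∏ j, rho ν (v j).1 * rho ν (v j).2 : NNReal) : ENNReal) := by
    intro v
    rw [wordP]
    push_cast
    exact Finset.prod_congr rfl fun j _ => by
      rw [pp, rho, rho, ENNReal.coe_toNNReal (measure_ne_top ν _),
        ENNReal.coe_toNNReal (measure_ne_top ν _)]
  rw [Finset.sum_congr rfl fun v _ => hcoe v, ← ENNReal.coe_finset_sum, ENNReal.coe_inj]
  -- now a pure `NNReal` identity
  set P : Finset ((Fin n → Fin (d + 1)) × (Fin n → Fin (d + 1))) :=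
    univ.filter fun x => wsum x.1 = wsum x.2 with hP
  have step1 : (∑ v ∈ Teq d n, ∏ j, rho ν (v j).1 * rho ν (v j).2)
      = ∑ x ∈ P, (∏ j, rho ν (x.1 j)) * (∏ j, rho ν (x.2 j)) := by
    apply Finset.sum_nbij' (fun v => (fun j => (v j).1, fun j => (v j).2))
      (fun x j => (x.1 j, x.2 j))
    · intro v hv
      simp only [hP, Finset.mem_filter, Finset.mem_univ, true_and]
      simp only [Teq, Finset.mem_filter, Finset.mem_univ, true_and] at hv
      rw [SXw_full, SYw_full] at hv
      exact hv
    · intro x hx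
      simp only [hP, Finset.mem_filter, Finset.mem_univ, true_and] at hx
      simp only [Teq, Finset.mem_filter, Finset.mem_univ, true_and]
      rw [SXw_full, SYw_full]
      exact hx
    · intro v _; rfl
    · intro x _; rfl
    · intro v _
      rw [← Finset.prod_mul_distrib]
  rw [step1]
  -- fiber over the common value of `wsum`
  rw [← Finset.sum_fiberwise_of_maps_to (g := fun x : (Fin n → Fin (d + 1)) × (Fin n → Fin (d + 1)) => wsum x.1)
    (t := range (n * d + 1)) (fun x _ => Finset.mem_range.2 (wsum_lt n x.1))]
  apply Finset.sum_congr rfl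
  intro a _
  have hfib : P.filter (fun x => wsum x.1 = a)
      = (univ.filter fun w : Fin n → Fin (d + 1) => wsum w = a) ×ˢ
        (univ.filter fun w : Fin n → Fin (d + 1) => wsum w = a) := by
    ext x
    simp only [hP, Finset.mem_filter, Finset.mem_univ, true_and, Finset.mem_product]
    constructor
    · rintro ⟨h1, h2⟩; exact ⟨h2, h1 ▸ h2⟩
    · rintro ⟨h1, h2⟩; exact ⟨h1.trans h2.symm, h1⟩
  rw [hfib, Finset.sum_product, qq, sq]
  rw [Finset.sum_mul_sum]

include hX hY hXd hYd hind

lemma measure_Teq_lower (n : ℕ) :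
    1 ≤ ((n * d + 1 : ℕ) : ENNReal) * μ (Ev X Y 0 (Teq d n)) := by
  rw [measure_Ev hX hY hXd hYd hind, Teq_sum_eq]
  have hcs : (1 : NNReal) ≤ (n * d + 1 : NNReal) * ∑ a ∈ range (n * d + 1), (qq ν n a) ^ 2 := by
    have h := sq_sum_le_card_mul_sum_sq (s := range (n * d + 1)) (f := qq ν n)
    rw [sum_qq, one_pow, Finset.card_range] at h
    calc (1 : NNReal) ≤ ((n * d + 1 : ℕ) : NNReal) * ∑ a ∈ range (n * d + 1), (qq ν n a) ^ 2 := h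
      _ = (n * d + 1 : NNReal) * ∑ a ∈ range (n * d + 1), (qq ν n a) ^ 2 := by push_cast; ring_nf
  calc (1 : ENNReal) = ((1 : NNReal) : ENNReal) := rfl
    _ ≤ (((n * d + 1 : NNReal) * ∑ a ∈ range (n * d + 1), (qq ν n a) ^ 2 : NNReal) : ENNReal) := by
        exact_mod_cast hcs
    _ = ((n * d + 1 : ℕ) : ENNReal) * ((∑ a ∈ range (n * d + 1), (qq ν n a) ^ 2 : NNReal) : ENNReal) := by
        push_cast; ring

omit hX hY hXd hYd hind


/-! ### The walk returns to the diagonal almost surely -/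

include hX hY hXd hYd hind

lemma measure_first_return_total :
    μ (⋃ k, Ev X Y 0 (Tfirst d (k + 1))) = 1 := by
  classical
  by_contra hne
  have hle : μ (⋃ k, Ev X Y 0 (Tfirst d (k + 1))) ≤ 1 := prob_le_one
  have hlt : μ (⋃ k, Ev X Y 0 (Tfirst d (k + 1))) < 1 := lt_of_le_of_ne hle hne
  set c : ENNReal := μ (⋃ k, Ev X Y 0 (Tfirst d (k + 1))) with hc
  -- partial sums of the first-return probabilities are at most `c`
  have hpart : ∀ N, (∑ k ∈ Finset.Icc 1 N, μ (Ev X Y 0 (Tfirst d k))) ≤ c := by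
    intro N
    rw [← measure_biUnion_finset ?_ (fun k _ => measurable_Ev hX hY _ _)]
    · apply measure_mono
      apply Set.iUnion₂_subset
      intro k hk
      simp only [Finset.mem_Icc] at hk
      have hk' : k = (k - 1) + 1 := by omega
      rw [hk']
      exact Set.subset_iUnion (fun j => Ev X Y 0 (Tfirst d (j + 1))) (k - 1)
    · intro k hk k' hk' hkk
      simp only [Finset.coe_Icc, Set.mem_Icc] at hk hk'
      rcases lt_or_gt_of_ne hkk with h | h
      · exact Tfirst_disjoint' hk.1 h
      · exact (Tfirst_disjoint' hk'.1 h).symm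
  -- real-valued quantities
  set ur : ℕ → ℝ := fun n => (μ (Ev X Y 0 (Teq d n))).toReal with hur
  set fr : ℕ → ℝ := fun k => (μ (Ev X Y 0 (Tfirst d k))).toReal with hfr
  have hur_nonneg : ∀ n, 0 ≤ ur n := fun n => ENNReal.toReal_nonneg
  have hfr_nonneg : ∀ n, 0 ≤ fr n := fun n => ENNReal.toReal_nonneg
  have hu0 : ur 0 = 1 := by
    simp only [hur, Ev_Teq_zero, measure_univ, ENNReal.toReal_one]
  have hcr : c.toReal < 1 := by
    rw [← ENNReal.toReal_one]
    exact ENNReal.toReal_strict_mono ENNReal.one_ne_top hlt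
  have hcr0 : 0 ≤ c.toReal := ENNReal.toReal_nonneg
  have hfr_sum : ∀ N, (∑ k ∈ Finset.Icc 1 N, fr k) ≤ c.toReal := by
    intro N
    rw [hfr, ← ENNReal.toReal_sum (fun k _ => measure_ne_top μ _)]
    exact ENNReal.toReal_mono (hlt.trans ENNReal.one_lt_top).ne (hpart N)
  have hren : ∀ n, 0 < n → ur n = ∑ k ∈ Finset.Icc 1 n, fr k * ur (n - k) := by
    intro n hn
    rw [hur]
    simp only
    rw [measure_renewal hX hY hXd hYd hind n hn,
      ENNReal.toReal_sum (fun k _ => (ENNReal.mul_ne_top (measure_ne_top μ _) (measure_ne_top μ _)))]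
    exact Finset.sum_congr rfl fun k _ => ENNReal.toReal_mul
  have hlow : ∀ n, 0 < n → 1 / ((n * d + 1 : ℕ) : ℝ) ≤ ur n := by
    intro n _
    have h := measure_Teq_lower hX hY hXd hYd hind (n := n)
    have hfin : ((n * d + 1 : ℕ) : ENNReal) * μ (Ev X Y 0 (Teq d n)) ≠ ⊤ :=
      ENNReal.mul_ne_top (ENNReal.natCast_ne_top _) (measure_ne_top μ _)
    have h2 : (1 : ℝ) ≤ ((n * d + 1 : ℕ) : ℝ) * ur n := by
      have := ENNReal.toReal_mono hfin h
      rw [ENNReal.toReal_one, ENNReal.toReal_mul, ENNReal.toReal_natCast] at this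
      simpa using this
    rw [div_le_iff₀ (by positivity)]
    linarith [h2]
  -- the key renewal inequality
  set S : ℕ → ℝ := fun N => ∑ n ∈ Finset.Icc 1 N, ur n with hS
  have hkey : ∀ N, S N ≤ c.toReal * (1 + S N) := by
    intro N
    rcases Nat.eq_zero_or_pos N with rfl | hN
    · have h0 : S 0 = 0 := by simp [hS]
      rw [h0]
      have h1 : (0:ℝ) ≤ c.toReal * (1 + 0) := by positivity
      linarith
    have step1 : S N = ∑ p ∈ (Finset.Icc 1 N).sigma (fun n => Finset.Icc 1 n),
        fr p.2 * ur (p.1 - p.2) := by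
      rw [hS, Finset.sum_sigma]
      exact Finset.sum_congr rfl fun n hn =>
        hren n (by simp only [Finset.mem_Icc] at hn; omega)
    have step2 : (∑ p ∈ (Finset.Icc 1 N).sigma (fun n => Finset.Icc 1 n),
          fr p.2 * ur (p.1 - p.2))
        = ∑ x ∈ ((Finset.Icc 1 N).sigma (fun n => Finset.Icc 1 n)).image
            (fun p => (p.2, p.1 - p.2)), fr x.1 * ur x.2 := by
      rw [Finset.sum_image]
      intro p hp p' hp' h
      simp only [Finset.mem_coe, Finset.mem_sigma, Finset.mem_Icc] at hp hp'
      simp only [Prod.mk.injEq] at h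
      have : p.1 = p'.1 := by omega
      exact Sigma.ext this (by rw [h.1])
    have step3 : (∑ x ∈ ((Finset.Icc 1 N).sigma (fun n => Finset.Icc 1 n)).image
            (fun p => (p.2, p.1 - p.2)), fr x.1 * ur x.2)
        ≤ ∑ x ∈ Finset.Icc 1 N ×ˢ Finset.range N, fr x.1 * ur x.2 := by
      apply Finset.sum_le_sum_of_subset_of_nonneg
      · intro x hx
        simp only [Finset.mem_image, Finset.mem_sigma, Finset.mem_Icc] at hx
        obtain ⟨p, ⟨h1, h2⟩, rfl⟩ := hx
        simp only [Finset.mem_product, Finset.mem_Icc, Finset.mem_range]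
        omega
      · intro x _ _
        exact mul_nonneg (hfr_nonneg _) (hur_nonneg _)
    have step4 : (∑ x ∈ Finset.Icc 1 N ×ˢ Finset.range N, fr x.1 * ur x.2)
        = (∑ k ∈ Finset.Icc 1 N, fr k) * (∑ m ∈ Finset.range N, ur m) := by
      rw [Finset.sum_mul_sum, Finset.sum_product]
    have step5 : (∑ m ∈ Finset.range N, ur m) ≤ 1 + S N := by
      have hins : Finset.range N = insert 0 (Finset.Ico 1 N) := by
        ext i
        simp only [Finset.mem_range, Finset.mem_insert, Finset.mem_Ico]
        omega
      rw [hins, Finset.sum_insert (by simp), hu0]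
      have : (∑ m ∈ Finset.Ico 1 N, ur m) ≤ S N := by
        apply Finset.sum_le_sum_of_subset_of_nonneg
        · intro m hm
          simp only [Finset.mem_Ico] at hm
          simp only [Finset.mem_Icc]
          omega
        · exact fun m _ _ => hur_nonneg m
      linarith
    calc S N = ∑ p ∈ (Finset.Icc 1 N).sigma (fun n => Finset.Icc 1 n),
          fr p.2 * ur (p.1 - p.2) := step1
      _ = _ := step2
      _ ≤ ∑ x ∈ Finset.Icc 1 N ×ˢ Finset.range N, fr x.1 * ur x.2 := step3
      _ = (∑ k ∈ Finset.Icc 1 N, fr k) * (∑ m ∈ Finset.range N, ur m) := step4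
      _ ≤ c.toReal * (1 + S N) := by
          exact mul_le_mul (hfr_sum N) step5
            (Finset.sum_nonneg fun m _ => hur_nonneg m) hcr0
  -- hence `S` is bounded
  set M : ℝ := c.toReal / (1 - c.toReal) with hM
  have hSM : ∀ N, S N ≤ M := by
    intro N
    have h := hkey N
    rw [hM]
    rw [le_div_iff₀ (by linarith)]
    nlinarith
  -- but `S` is unbounded, by the harmonic series
  have hSlow : ∀ N, (1 / ((d : ℝ) + 1)) * (∑ i ∈ Finset.range N, (1 : ℝ) / (i + 1)) ≤ S N := by
    intro N
    have h1 : ∀ n ∈ Finset.Icc 1 N, (1 / ((d : ℝ) + 1)) * (1 / n) ≤ ur n := by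
      intro n hn
      simp only [Finset.mem_Icc] at hn
      have h2 := hlow n hn.1
      have h3 : (1 / ((d : ℝ) + 1)) * (1 / n) ≤ 1 / ((n * d + 1 : ℕ) : ℝ) := by
        rw [div_mul_div_comm, one_mul]
        apply div_le_div_of_nonneg_left (by norm_num) (by push_cast; positivity)
        have hn1 : (1:ℝ) ≤ (n:ℝ) := by exact_mod_cast hn.1
        push_cast
        nlinarith [hn1]
      linarith
    calc (1 / ((d : ℝ) + 1)) * (∑ i ∈ Finset.range N, (1 : ℝ) / (i + 1))
        = ∑ n ∈ Finset.Icc 1 N, (1 / ((d : ℝ) + 1)) * (1 / n) := by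
          rw [Finset.mul_sum, ← Finset.Ico_add_one_right_eq_Icc, Finset.sum_Ico_eq_sum_range]
          apply Finset.sum_congr (by norm_num)
          intro i _
          push_cast
          ring_nf
      _ ≤ S N := Finset.sum_le_sum h1
  obtain ⟨N, hN⟩ := Filter.Tendsto.eventually_ge_atTop
    Real.tendsto_sum_range_one_div_nat_succ_atTop (((d : ℝ) + 1) * (M + 1)) |>.exists
  have h1 := hSlow N
  have h2 := hSM N
  have hd1 : (0:ℝ) < (d : ℝ) + 1 := by positivity
  have : (1 / ((d : ℝ) + 1)) * (((d : ℝ) + 1) * (M + 1)) ≤ M := by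
    calc (1 / ((d : ℝ) + 1)) * (((d : ℝ) + 1) * (M + 1))
        ≤ (1 / ((d : ℝ) + 1)) * (∑ i ∈ Finset.range N, (1 : ℝ) / (i + 1)) := by
          apply mul_le_mul_of_nonneg_left hN (by positivity)
      _ ≤ M := le_trans h1 h2
    
  rw [one_div, inv_mul_cancel_left₀ (ne_of_gt hd1)] at this
  linarith

omit hX hY hXd hYd hind


/-! ### Infinitely many returns -/

lemma Tfirst_disjoint_pos (k : ℕ) {m m' : ℕ} (h1 : 0 < m) (hmm : m < m') :
    Disjoint (Ev X Y k (Tfirst d m)) (Ev X Y k (Tfirst d m')) := by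
  rw [Set.disjoint_left]
  rintro ω ha hb
  rw [mem_Ev_Tfirst] at ha hb
  exact hb.2 m h1 hmm ha.1

lemma Tret_disjoint {j k k' : ℕ} (hj : 1 ≤ j) (hkk : k < k') :
    Disjoint (Ev X Y 0 (Tret d j k)) (Ev X Y 0 (Tret d j k')) := by
  classical
  rw [Set.disjoint_left]
  rintro ω ha hb
  rw [mem_Ev_Tret] at ha hb
  obtain ⟨ha1, ha2⟩ := ha
  obtain ⟨hb1, hb2⟩ := hb
  rcases Nat.eq_zero_or_pos k with rfl | hk
  · rw [show Finset.Icc 1 0 = ∅ from rfl] at ha2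
    simp at ha2
    omega
  have hsub : (Finset.Icc 1 k).filter (fun t => bX X 0 t ω = bX Y 0 t ω)
      ⊆ (Finset.Icc 1 k').filter (fun t => bX X 0 t ω = bX Y 0 t ω) :=
    Finset.filter_subset_filter _ (Finset.Icc_subset_Icc le_rfl hkk.le)
  have heq := Finset.eq_of_subset_of_card_le hsub (by rw [ha2, hb2])
  have hmem : k' ∈ (Finset.Icc 1 k').filter (fun t => bX X 0 t ω = bX Y 0 t ω) :=
    Finset.mem_filter.2 ⟨Finset.mem_Icc.2 ⟨by omega, le_rfl⟩, hb1⟩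
  rw [← heq, Finset.mem_filter, Finset.mem_Icc] at hmem
  omega

lemma Tret_one (k : ℕ) (hk : 1 ≤ k) :
    Ev X Y 0 (Tret d 1 k) = Ev X Y 0 (Tfirst d k) := by
  classical
  ext ω
  rw [mem_Ev_Tret, mem_Ev_Tfirst]
  constructor
  · rintro ⟨h1, h2⟩
    refine ⟨h1, fun t ht htk heq => ?_⟩
    have hsub : ({t, k} : Finset ℕ)
        ⊆ (Finset.Icc 1 k).filter (fun s => bX X 0 s ω = bX Y 0 s ω) := by
      intro x hx
      simp only [Finset.mem_insert, Finset.mem_singleton] at hx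
      rcases hx with rfl | rfl
      · exact Finset.mem_filter.2 ⟨Finset.mem_Icc.2 ⟨by omega, by omega⟩, heq⟩
      · exact Finset.mem_filter.2 ⟨Finset.mem_Icc.2 ⟨by omega, le_rfl⟩, h1⟩
    have hcard := Finset.card_le_card hsub
    rw [h2, Finset.card_insert_of_notMem (by simp; omega), Finset.card_singleton] at hcard
    omega
  · rintro ⟨h1, h2⟩
    refine ⟨h1, ?_⟩
    have : (Finset.Icc 1 k).filter (fun t => bX X 0 t ω = bX Y 0 t ω) = {k} := by
      ext t
      simp only [Finset.mem_filter, Finset.mem_Icc, Finset.mem_singleton]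
      constructor
      · rintro ⟨⟨ht1, ht2⟩, hPt⟩
        by_contra hne
        exact h2 t (by omega) (by omega) hPt
      · rintro rfl
        exact ⟨⟨hk, le_rfl⟩, h1⟩
    rw [this, Finset.card_singleton]

lemma Rstep_subset (j k m : ℕ) (hk : 1 ≤ k) (hm : 1 ≤ m) :
    Ev X Y 0 (Tret d j k) ∩ Ev X Y k (Tfirst d m) ⊆ Ev X Y 0 (Tret d (j + 1) (k + m)) := by
  classical
  rintro ω ⟨ha, hb⟩
  rw [mem_Ev_Tret] at ha
  rw [mem_Ev_Tfirst] at hb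
  obtain ⟨ha1, ha2⟩ := ha
  obtain ⟨hb1, hb2⟩ := hb
  rw [mem_Ev_Tret]
  have ex1 := bX_add X k m ω
  have ex2 := bX_add Y k m ω
  constructor
  · omega
  · have hins : (Finset.Icc 1 (k + m)).filter (fun t => bX X 0 t ω = bX Y 0 t ω)
        = insert (k + m) ((Finset.Icc 1 k).filter (fun t => bX X 0 t ω = bX Y 0 t ω)) := by
      ext t
      simp only [Finset.mem_filter, Finset.mem_Icc, Finset.mem_insert]
      constructor
      · rintro ⟨⟨ht1, ht2⟩, hPt⟩
        by_cases htk : t ≤ k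
        · exact Or.inr ⟨⟨ht1, htk⟩, hPt⟩
        · left
          by_contra hne
          have e1 := bX_add X k (t - k) ω
          have e2 := bX_add Y k (t - k) ω
          rw [Nat.add_sub_cancel' (by omega : k ≤ t)] at e1 e2
          exact hb2 (t - k) (by omega) (by omega) (by omega)
      · rintro (rfl | ⟨⟨ht1, ht2⟩, hPt⟩)
        · exact ⟨⟨by omega, le_rfl⟩, by omega⟩
        · exact ⟨⟨ht1, by omega⟩, hPt⟩
    rw [hins, Finset.card_insert_of_notMem ?_, ha2]
    simp only [Finset.mem_filter, Finset.mem_Icc]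
    rintro ⟨⟨h1, h2⟩, -⟩
    omega

include hX hY hXd hYd hind

lemma measure_Rj (j : ℕ) (hj : 1 ≤ j) :
    μ (⋃ k, Ev X Y 0 (Tret d j (k + 1))) = 1 := by
  classical
  induction j, hj using Nat.le_induction with
  | base =>
    have : (⋃ k, Ev X Y 0 (Tret d 1 (k + 1))) = ⋃ k, Ev X Y 0 (Tfirst d (k + 1)) :=
      Set.iUnion_congr fun k => Tret_one (k + 1) (Nat.succ_le_succ (Nat.zero_le k))
    rw [this]
    exact measure_first_return_total hX hY hXd hYd hind
  | succ j hj ih =>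
    apply le_antisymm prob_le_one
    -- partial sums of `μ (R j k)` and `μ (F m)` have supremum 1
    have hRsum : (⨆ K, ∑ k ∈ Finset.Icc 1 K, μ (Ev X Y 0 (Tret d j k))) = 1 := by
      have hU : μ (⋃ k, Ev X Y 0 (Tret d j (k + 1)))
          = ∑' k, μ (Ev X Y 0 (Tret d j (k + 1))) := by
        apply measure_iUnion ?_ (fun k => measurable_Ev hX hY _ _)
        intro k k' hkk
        rcases lt_or_gt_of_ne hkk with h | h
        · exact Tret_disjoint hj (by omega)
        · exact (Tret_disjoint hj (by omega)).symm
      rw [ih] at hU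
      calc (⨆ K, ∑ k ∈ Finset.Icc 1 K, μ (Ev X Y 0 (Tret d j k)))
          = ⨆ K, ∑ k ∈ Finset.range K, μ (Ev X Y 0 (Tret d j (k + 1))) := by
            apply iSup_congr
            intro K
            rw [← Finset.Ico_add_one_right_eq_Icc, Finset.sum_Ico_eq_sum_range]
            apply Finset.sum_congr (by norm_num)
            intro i _
            rw [add_comm]
        _ = ∑' k, μ (Ev X Y 0 (Tret d j (k + 1))) := ENNReal.tsum_eq_iSup_nat.symm
        _ = 1 := hU.symm
    have hFsum : (⨆ M, ∑ m ∈ Finset.Icc 1 M, μ (Ev X Y 0 (Tfirst d m))) = 1 := by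
      have hU : μ (⋃ m, Ev X Y 0 (Tfirst d (m + 1)))
          = ∑' m, μ (Ev X Y 0 (Tfirst d (m + 1))) := by
        apply measure_iUnion ?_ (fun m => measurable_Ev hX hY _ _)
        intro m m' hmm
        rcases lt_or_gt_of_ne hmm with h | h
        · exact Tfirst_disjoint' (by omega) (by omega)
        · exact (Tfirst_disjoint' (by omega) (by omega)).symm
      rw [measure_first_return_total hX hY hXd hYd hind] at hU
      calc (⨆ M, ∑ m ∈ Finset.Icc 1 M, μ (Ev X Y 0 (Tfirst d m)))
          = ⨆ M, ∑ m ∈ Finset.range M, μ (Ev X Y 0 (Tfirst d (m + 1))) := by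
            apply iSup_congr
            intro M
            rw [← Finset.Ico_add_one_right_eq_Icc, Finset.sum_Ico_eq_sum_range]
            apply Finset.sum_congr (by norm_num)
            intro i _
            rw [add_comm]
        _ = ∑' m, μ (Ev X Y 0 (Tfirst d (m + 1))) := ENNReal.tsum_eq_iSup_nat.symm
        _ = 1 := hU.symm
    apply ENNReal.le_of_forall_lt_one_mul_le
    intro a ha
    rw [mul_one]
    apply ENNReal.le_of_forall_lt_one_mul_le
    intro b hb
    obtain ⟨K, hK⟩ := lt_iSup_iff.mp (show b < _ from hRsum ▸ hb)
    obtain ⟨M, hM⟩ := lt_iSup_iff.mp (show a < _ from hFsum ▸ ha)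
    have hdisjoint : (↑(Finset.Icc 1 K ×ˢ Finset.Icc 1 M) : Set (ℕ × ℕ)).PairwiseDisjoint
        (fun x : ℕ × ℕ => Ev X Y 0 (Tret d j x.1) ∩ Ev X Y x.1 (Tfirst d x.2)) := by
      rintro ⟨k, m⟩ hx ⟨k', m'⟩ hx' hxx
      simp only [Finset.coe_product, Set.mem_prod, Finset.coe_Icc, Set.mem_Icc] at hx hx'
      by_cases he : k = k'
      · subst he
        have hne2 : m ≠ m' := fun h => hxx (by rw [h])
        rcases lt_or_gt_of_ne hne2 with h | h
        · exact (Tfirst_disjoint_pos k (by omega) h).mono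
            Set.inter_subset_right Set.inter_subset_right
        · exact ((Tfirst_disjoint_pos k (by omega) h).symm).mono
            Set.inter_subset_right Set.inter_subset_right
      · rcases lt_or_gt_of_ne he with h | h
        · exact (Tret_disjoint hj h).mono Set.inter_subset_left Set.inter_subset_left
        · exact ((Tret_disjoint hj h).symm).mono Set.inter_subset_left Set.inter_subset_left
    calc b * a ≤ (∑ k ∈ Finset.Icc 1 K, μ (Ev X Y 0 (Tret d j k)))
          * (∑ m ∈ Finset.Icc 1 M, μ (Ev X Y 0 (Tfirst d m))) := mul_le_mul' hK.le hM.le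
      _ = ∑ x ∈ Finset.Icc 1 K ×ˢ Finset.Icc 1 M,
            μ (Ev X Y 0 (Tret d j x.1)) * μ (Ev X Y 0 (Tfirst d x.2)) := by
          rw [Finset.sum_mul_sum, Finset.sum_product]
      _ = ∑ x ∈ Finset.Icc 1 K ×ˢ Finset.Icc 1 M,
            μ (Ev X Y 0 (Tret d j x.1) ∩ Ev X Y x.1 (Tfirst d x.2)) :=
          Finset.sum_congr rfl fun x _ =>
            (measure_Ev_inter hX hY hXd hYd hind _ _).symm
      _ = μ (⋃ x ∈ Finset.Icc 1 K ×ˢ Finset.Icc 1 M,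
            (Ev X Y 0 (Tret d j x.1) ∩ Ev X Y x.1 (Tfirst d x.2))) :=
          (measure_biUnion_finset hdisjoint fun x _ =>
            (measurable_Ev hX hY _ _).inter (measurable_Ev hX hY _ _)).symm
      _ ≤ μ (⋃ k, Ev X Y 0 (Tret d (j + 1) (k + 1))) := by
          apply measure_mono
          apply Set.iUnion₂_subset
          rintro ⟨k, m⟩ hx
          simp only [Finset.mem_product, Finset.mem_Icc] at hx
          refine subset_trans (Rstep_subset j k m hx.1.1 hx.2.1) ?_
          have hkm : k + m = (k + m - 1) + 1 := by omega
          rw [hkm]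
          exact Set.subset_iUnion (fun i => Ev X Y 0 (Tret d (j + 1) (i + 1))) (k + m - 1)

lemma ae_infinite_returns :
    ∀ᵐ ω ∂μ, {n : ℕ | ∑ i ∈ Finset.range n, (X i ω : ℕ)
      = ∑ i ∈ Finset.range n, (Y i ω : ℕ)}.Infinite := by
  classical
  have hae : ∀ᵐ ω ∂μ, ∀ j : ℕ, ω ∈ ⋃ k, Ev X Y 0 (Tret d (j + 1) (k + 1)) := by
    rw [MeasureTheory.ae_all_iff]
    intro j
    have hm : MeasurableSet (⋃ k, Ev X Y 0 (Tret d (j + 1) (k + 1))) :=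
      MeasurableSet.iUnion fun k => measurable_Ev hX hY _ _
    have h1 := measure_Rj hX hY hXd hYd hind (j + 1) (by omega)
    rw [← prob_compl_eq_zero_iff hm] at h1
    rw [MeasureTheory.ae_iff]
    exact h1
  filter_upwards [hae] with ω hω
  by_contra hfin
  rw [Set.not_infinite] at hfin
  obtain ⟨k, hk⟩ := Set.mem_iUnion.mp (hω hfin.toFinset.card)
  rw [mem_Ev_Tret] at hk
  obtain ⟨-, hcard⟩ := hk
  have hsub : (Finset.Icc 1 (k + 1)).filter (fun t => bX X 0 t ω = bX Y 0 t ω)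
      ⊆ hfin.toFinset := by
    intro t ht
    rw [Finset.mem_filter] at ht
    rw [Set.Finite.mem_toFinset]
    have hbx : bX X 0 t ω = ∑ i ∈ Finset.range t, (X i ω : ℕ) := by simp [bX]
    have hby : bX Y 0 t ω = ∑ i ∈ Finset.range t, (Y i ω : ℕ) := by simp [bX]
    show ∑ i ∈ Finset.range t, (X i ω : ℕ) = ∑ i ∈ Finset.range t, (Y i ω : ℕ)
    omega
  have hle := Finset.card_le_card hsub
  rw [hcard] at hle
  omega

end RWMeet

open MeasureTheory

/-- Recurrence of the mean-zero bounded random walk: if `(X_i)` and `(Y_i)` are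
jointly independent random variables with values in `{0,…,d}`, all with the
same distribution `ν`, then almost surely the partial sums of the `X_i` and of
the `Y_i` agree at infinitely many times. -/
theorem random_walk_meets_infinitely_often
    (d : ℕ) {Ω : Type*} [MeasurableSpace Ω] (μ : Measure Ω) [IsProbabilityMeasure μ]
    (ν : Measure (Fin (d + 1))) [IsProbabilityMeasure ν]
    (X Y : ℕ → Ω → Fin (d + 1))
    (hX : ∀ i, Measurable (X i)) (hY : ∀ i, Measurable (Y i))
    (hXd : ∀ i, Measure.map (X i) μ = ν) (hYd : ∀ i, Measure.map (Y i) μ = ν)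
    (hindep : ProbabilityTheory.iIndepFun
      (Sum.elim X Y) μ) :
    ∀ᵐ ω ∂μ, {n : ℕ | ∑ i ∈ Finset.range n, (X i ω : ℕ) =
      ∑ i ∈ Finset.range n, (Y i ω : ℕ)}.Infinite :=
  RWMeet.ae_infinite_returns hX hY hXd hYd hindep
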